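/- For real numbers a_0, a_1, b_1 with a_0 > 0 and a_0^2 > a_1^2 + b_1^2 and (a_1, b_1) ≠ (0,0), the integral ∫_0^1 cos(2πy) / (a_0 + a_1 cos(2πy) + b_1 sin(2πy)) dy equals a_1(√(a_0^2 - a_1^2 - b_1^2) - a_0) / ((a_1^2 + b_1^2)√(a_0^2 - a_1^2 - b_1^2)). -/

import Mathlib

set_option maxHeartbeats 1000000

open Real

lemma Gderiv (a₀ a₁ b₁ s y : ℝ) (hs : 0 < s)
    (hs2 : s ^ 2 = a₀ ^ 2 - a₁ ^ 2 - b₁ ^ 2)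
    (hM : 0 < a₀ + s + a₁ * Real.cos (2*π*y) + b₁ * Real.sin (2*π*y))
    (hD : 0 < a₀ + a₁ * Real.cos (2*π*y) + b₁ * Real.sin (2*π*y)) :
    HasDerivAt (fun y => y / s - (1 / (π * s)) *
        Real.arctan ((a₁ * Real.sin (2*π*y) - b₁ * Real.cos (2*π*y)) /
          (a₀ + s + a₁ * Real.cos (2*π*y) + b₁ * Real.sin (2*π*y))))
      (1 / (a₀ + a₁ * Real.cos (2*π*y) + b₁ * Real.sin (2*π*y))) y := by
  have harg : HasDerivAt (fun y : ℝ => 2*π*y) (2*π) y := by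
    simpa using (hasDerivAt_id y).const_mul (2*π)
  have hc : HasDerivAt (fun y : ℝ => Real.cos (2*π*y)) (-Real.sin (2*π*y) * (2*π)) y :=
    (Real.hasDerivAt_cos (2*π*y)).comp y harg
  have hsin : HasDerivAt (fun y : ℝ => Real.sin (2*π*y)) (Real.cos (2*π*y) * (2*π)) y :=
    (Real.hasDerivAt_sin (2*π*y)).comp y harg
  have hN : HasDerivAt (fun y : ℝ => a₁ * Real.sin (2*π*y) - b₁ * Real.cos (2*π*y))
      (a₁ * (Real.cos (2*π*y) * (2*π)) - b₁ * (-Real.sin (2*π*y) * (2*π))) y :=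
    (hsin.const_mul a₁).sub (hc.const_mul b₁)
  have hMd : HasDerivAt (fun y : ℝ => a₀ + s + a₁ * Real.cos (2*π*y) + b₁ * Real.sin (2*π*y))
      (a₁ * (-Real.sin (2*π*y) * (2*π)) + b₁ * (Real.cos (2*π*y) * (2*π))) y := by
    exact (((hc.const_mul a₁).const_add (a₀ + s)).add (hsin.const_mul b₁))
  have hq := hN.div hMd hM.ne'
  have har := (Real.hasDerivAt_arctan _).comp y hq
  have hfull := ((hasDerivAt_id y).div_const s).sub ((har.const_mul (1/(π*s))))
  refine hfull.congr_deriv ?_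
  symm
  simp only [Pi.div_apply]
  set c := Real.cos (2*π*y)
  set si := Real.sin (2*π*y)
  have hpy : si ^ 2 + c ^ 2 = 1 := Real.sin_sq_add_cos_sq _
  have hMN : (a₀ + s + a₁ * c + b₁ * si) ^ 2 + (a₁ * si - b₁ * c) ^ 2
      = 2 * (a₀ + s) * (a₀ + a₁ * c + b₁ * si) := by nlinarith [hpy, hs2]
  have h1 : 1 + ((a₁ * si - b₁ * c) / (a₀ + s + a₁ * c + b₁ * si)) ^ 2
      = 2 * (a₀ + s) * (a₀ + a₁ * c + b₁ * si) / (a₀ + s + a₁ * c + b₁ * si) ^ 2 := by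
    rw [div_pow, eq_div_iff (pow_pos hM 2).ne', add_mul, div_mul_cancel₀ _ (pow_pos hM 2).ne']
    linarith [hMN]
  rw [h1]
  have has : 0 < a₀ + s := by nlinarith
  have hπ := Real.pi_pos
  have hbcN : (a₁*c + b₁*si)^2 + (a₁*si - b₁*c)^2 = a₁^2 + b₁^2 := by
    linear_combination (a₁^2 + b₁^2) * hpy
  field_simp
  linear_combination hbcN + hs2

theorem stmt_1 (a₀ a₁ b₁ : ℝ) (h₀ : 0 < a₀) (h : a₁ ^ 2 + b₁ ^ 2 < a₀ ^ 2)
    (hne : (a₁, b₁) ≠ (0, 0)) :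
    ∫ y in (0:ℝ)..1,
        Real.cos (2 * π * y) / (a₀ + a₁ * Real.cos (2 * π * y) + b₁ * Real.sin (2 * π * y)) =
      a₁ * (Real.sqrt (a₀ ^ 2 - a₁ ^ 2 - b₁ ^ 2) - a₀) /
        ((a₁ ^ 2 + b₁ ^ 2) * Real.sqrt (a₀ ^ 2 - a₁ ^ 2 - b₁ ^ 2)) := by
  have hr2 : 0 < a₁ ^ 2 + b₁ ^ 2 := by
    have hne' : a₁ ≠ 0 ∨ b₁ ≠ 0 := by
      by_contra hcon
      push_neg at hcon
      exact hne (by simp [hcon.1, hcon.2])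
    rcases hne' with ha | hb
    · have : 0 < a₁ ^ 2 := by positivity
      nlinarith [sq_nonneg b₁]
    · have : 0 < b₁ ^ 2 := by positivity
      nlinarith [sq_nonneg a₁]
  set s := Real.sqrt (a₀ ^ 2 - a₁ ^ 2 - b₁ ^ 2) with hs_def
  have hs2 : s ^ 2 = a₀ ^ 2 - a₁ ^ 2 - b₁ ^ 2 := Real.sq_sqrt (by linarith)
  have hs : 0 < s := Real.sqrt_pos.2 (by linarith)
  have hπ := Real.pi_pos
  have hbound : ∀ y : ℝ, (a₁ * Real.cos (2*π*y) + b₁ * Real.sin (2*π*y)) ^ 2 ≤ a₁ ^ 2 + b₁ ^ 2 := by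
    intro y
    nlinarith [Real.sin_sq_add_cos_sq (2*π*y),
      sq_nonneg (a₁ * Real.sin (2*π*y) - b₁ * Real.cos (2*π*y))]
  have hD : ∀ y : ℝ, 0 < a₀ + a₁ * Real.cos (2*π*y) + b₁ * Real.sin (2*π*y) := by
    intro y
    nlinarith [hbound y, h₀, h]
  have hM : ∀ y : ℝ, 0 < a₀ + s + a₁ * Real.cos (2*π*y) + b₁ * Real.sin (2*π*y) := by
    intro y
    nlinarith [hD y, hs]
  set F : ℝ → ℝ := fun y =>
    a₁ / (a₁ ^ 2 + b₁ ^ 2) * y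
      + b₁ / (2 * π * (a₁ ^ 2 + b₁ ^ 2)) *
          Real.log (a₀ + a₁ * Real.cos (2*π*y) + b₁ * Real.sin (2*π*y))
      - a₀ * a₁ / (a₁ ^ 2 + b₁ ^ 2) *
          (y / s - (1 / (π * s)) *
            Real.arctan ((a₁ * Real.sin (2*π*y) - b₁ * Real.cos (2*π*y)) /
              (a₀ + s + a₁ * Real.cos (2*π*y) + b₁ * Real.sin (2*π*y)))) with hF_def
  have hderiv : ∀ y ∈ Set.uIcc (0:ℝ) 1, HasDerivAt F
      (Real.cos (2*π*y) / (a₀ + a₁ * Real.cos (2*π*y) + b₁ * Real.sin (2*π*y))) y := by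
    intro y _
    have harg : HasDerivAt (fun y : ℝ => 2*π*y) (2*π) y := by
      simpa using (hasDerivAt_id y).const_mul (2*π)
    have hc : HasDerivAt (fun y : ℝ => Real.cos (2*π*y)) (-Real.sin (2*π*y) * (2*π)) y :=
      (Real.hasDerivAt_cos (2*π*y)).comp y harg
    have hsin : HasDerivAt (fun y : ℝ => Real.sin (2*π*y)) (Real.cos (2*π*y) * (2*π)) y :=
      (Real.hasDerivAt_sin (2*π*y)).comp y harg
    have hDd : HasDerivAt (fun y : ℝ => a₀ + a₁ * Real.cos (2*π*y) + b₁ * Real.sin (2*π*y))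
        (a₁ * (-Real.sin (2*π*y) * (2*π)) + b₁ * (Real.cos (2*π*y) * (2*π))) y := by
      exact (((hc.const_mul a₁).const_add a₀).add (hsin.const_mul b₁))
    have hlog : HasDerivAt
        (fun y : ℝ => Real.log (a₀ + a₁ * Real.cos (2*π*y) + b₁ * Real.sin (2*π*y)))
        ((a₀ + a₁ * Real.cos (2*π*y) + b₁ * Real.sin (2*π*y))⁻¹ *
          (a₁ * (-Real.sin (2*π*y) * (2*π)) + b₁ * (Real.cos (2*π*y) * (2*π)))) y :=
      ((Real.hasDerivAt_log (hD y).ne').comp y hDd :)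
    have hG := Gderiv a₀ a₁ b₁ s y hs hs2 (hM y) (hD y)
    have hlin : HasDerivAt (fun y : ℝ => a₁ / (a₁ ^ 2 + b₁ ^ 2) * y)
        (a₁ / (a₁ ^ 2 + b₁ ^ 2)) y := by
      simpa using (hasDerivAt_id y).const_mul (a₁ / (a₁ ^ 2 + b₁ ^ 2))
    have hfull := (hlin.add (hlog.const_mul (b₁ / (2 * π * (a₁ ^ 2 + b₁ ^ 2))))).sub
      (hG.const_mul (a₀ * a₁ / (a₁ ^ 2 + b₁ ^ 2)))
    refine hfull.congr_deriv ?_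
    symm
    set c := Real.cos (2*π*y)
    set si := Real.sin (2*π*y)
    have hDne : a₀ + c * a₁ + b₁ * si ≠ 0 := (by linarith [hD y] : (0:ℝ) < a₀ + c * a₁ + b₁ * si).ne'
    field_simp
    ring
  have hint : IntervalIntegrable
      (fun y => Real.cos (2*π*y) / (a₀ + a₁ * Real.cos (2*π*y) + b₁ * Real.sin (2*π*y)))
      MeasureTheory.volume 0 1 := by
    apply Continuous.intervalIntegrable
    exact (Real.continuous_cos.comp (continuous_const.mul continuous_id)).div
      (by continuity) (fun y => (hD y).ne')
  have key := intervalIntegral.integral_eq_sub_of_hasDerivAt hderiv hint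
  rw [key]
  have e1 : 2 * π * (1:ℝ) = 2 * π := by ring
  have e0 : 2 * π * (0:ℝ) = 0 := by ring
  simp only [hF_def, e1, e0, Real.cos_two_pi, Real.sin_two_pi, Real.cos_zero, Real.sin_zero]
  have hr2' : (a₁ ^ 2 + b₁ ^ 2) ≠ 0 := hr2.ne'
  field_simp
  ring
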